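/- Over the rationals, NSym ⊗ ℚ is a free associative algebra, and its graded dual (QSym ⊗ ℚ) is a free commutative algebra (polynomial algebra) on the Lyndon words; in particular the graded dual pairing ⟨Z_{m_1}⋯Z_{m_r}, M_{(n_1,…,n_s)}⟩ = δ (equal compositions) is a perfect pairing of free abelian groups in each degree. -/

import Mathlib

open scoped Classical

/-- The monomial quasisymmetric function `M_α` as a formal power series in countably
many commuting variables. -/
def Mqs (α : List ℕ) : MvPowerSeries ℕ ℤ := fun d =>
  if (d.support.sort (· ≤ ·)).map d = α then 1 else 0

/-- The product `Z_{m_1} ⋯ Z_{m_r}` in `NSym = ℤ⟨Z_1, Z_2, …⟩` (realized inside the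
free associative `ℤ`-algebra on generators indexed by `ℕ`). -/
noncomputable def Zprod (c : List ℕ) : FreeAlgebra ℤ ℕ :=
  (c.map (FreeAlgebra.ι ℤ)).prod

/-- The degree-`m` component of `NSym`: the span of products of generators over
compositions of `m`. -/
noncomputable def NSymComp (m : ℕ) : Submodule ℤ (FreeAlgebra ℤ ℕ) :=
  Submodule.span ℤ (Set.range fun c : Composition m => Zprod c.blocks)

/-- The degree-`m` component of `QSym`: the span of the monomial quasisymmetric
functions over compositions of `m`. -/
def QSymComp (m : ℕ) : Submodule ℤ (MvPowerSeries ℕ ℤ) :=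
  Submodule.span ℤ (Set.range fun c : Composition m => Mqs c.blocks)

/-- The "staircase point" attached to a list `α`: the exponent vector with
`d i = α.getD i 0`. -/
noncomputable def pointOf (α : List ℕ) : ℕ →₀ ℕ :=
  Finsupp.onFinset (Finset.range α.length) (fun i => α.getD i 0)
    (fun i h => by
      simp only [Finset.mem_range]
      by_contra hi
      push_neg at hi
      exact h (List.getD_eq_default _ _ hi))

lemma pointOf_apply (α : List ℕ) (i : ℕ) : pointOf α i = α.getD i 0 := rfl

lemma pointOf_support {α : List ℕ} (hpos : ∀ x ∈ α, 0 < x) :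
    (pointOf α).support = Finset.range α.length := by
  ext i
  rw [Finsupp.mem_support_iff, pointOf_apply, Finset.mem_range]
  constructor
  · intro h
    by_contra hi
    push_neg at hi
    exact h (List.getD_eq_default _ _ hi)
  · intro h
    have := hpos (α.getD i 0) (by
      rw [List.getD_eq_getElem _ _ h]
      exact List.getElem_mem h)
    omega

lemma pointOf_sorted_map {α : List ℕ} (hpos : ∀ x ∈ α, 0 < x) :
    (((pointOf α).support.sort (· ≤ ·)).map (pointOf α)) = α := by
  rw [pointOf_support hpos, Finset.sort_range]
  apply List.ext_getElem
  · simp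
  · intro i h1 h2
    simp only [List.getElem_map, List.getElem_range]
    show (pointOf α) i = α[i]
    have hi : i < α.length := by simpa using h1
    show α.getD i 0 = α[i]
    rw [List.getD_eq_getElem _ _ hi]

lemma Mqs_pointOf (m : ℕ) (c c' : Composition m) :
    Mqs c'.blocks (pointOf c.blocks) = if c = c' then 1 else 0 := by
  have hpos : ∀ x ∈ c.blocks, 0 < x := fun x hx => c.blocks_pos hx
  unfold Mqs
  rw [pointOf_sorted_map hpos]
  by_cases h : c = c'
  · subst h; simp
  · rw [if_neg, if_neg h]
    intro hb
    exact h (Composition.ext hb)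

lemma Mqs_linearIndependent (m : ℕ) :
    LinearIndependent ℤ fun c : Composition m => Mqs c.blocks := by
  rw [linearIndependent_iff']
  intro s g hsum c hc
  have := congrArg (MvPowerSeries.coeff (pointOf c.blocks)) hsum
  rw [map_sum, map_zero] at this
  have hcoeff : ∀ c' : Composition m,
      MvPowerSeries.coeff (pointOf c.blocks) (Mqs c'.blocks)
        = if c = c' then 1 else 0 := fun c' => Mqs_pointOf m c c'
  have h2 : ∑ c' ∈ s, g c' * (if c = c' then (1 : ℤ) else 0) = 0 := by
    calc ∑ c' ∈ s, g c' * (if c = c' then (1 : ℤ) else 0)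
        = ∑ c' ∈ s, (MvPowerSeries.coeff (pointOf c.blocks)) (g c' • Mqs c'.blocks) := by
          refine Finset.sum_congr rfl fun c' _ => ?_
          rw [map_smul, hcoeff c', smul_eq_mul]
      _ = 0 := this
  simpa [mul_ite, mul_one, mul_zero, Finset.sum_ite_eq, hc] using h2

lemma equiv_Zprod (c : List ℕ) :
    FreeAlgebra.equivMonoidAlgebraFreeMonoid (R := ℤ) (X := ℕ) (Zprod c)
      = MonoidAlgebra.single (FreeMonoid.ofList c) (1 : ℤ) := by
  induction c with
  | nil =>
    show FreeAlgebra.equivMonoidAlgebraFreeMonoid (R := ℤ) (X := ℕ) 1 = _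
    rw [map_one]
    rfl
  | cons a l ih =>
    have : Zprod (a :: l) = FreeAlgebra.ι ℤ a * Zprod l := by
      simp [Zprod]
    rw [this, map_mul, ih]
    have hι : FreeAlgebra.equivMonoidAlgebraFreeMonoid (R := ℤ) (X := ℕ)
        (FreeAlgebra.ι ℤ a) = MonoidAlgebra.single (FreeMonoid.of a) 1 := by
      simp [FreeAlgebra.equivMonoidAlgebraFreeMonoid]
    rw [hι, MonoidAlgebra.single_mul_single, one_mul]
    rfl

lemma Zprod_linearIndependent (m : ℕ) :
    LinearIndependent ℤ fun c : Composition m => Zprod c.blocks := by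
  have hinj : Function.Injective
      (fun c : Composition m => FreeMonoid.ofList c.blocks) := by
    intro c c' h
    exact Composition.ext (congrArg FreeMonoid.toList h)
  have hli : LinearIndependent ℤ
      (fun c : Composition m =>
        MonoidAlgebra.single (FreeMonoid.ofList c.blocks) (1 : ℤ)) := by
    have := (MonoidAlgebra.basis (FreeMonoid ℕ) ℤ).linearIndependent.comp _ hinj
    simp only [MonoidAlgebra.basis_apply, Function.comp_def] at this
    convert this
  have := hli.map' (FreeAlgebra.equivMonoidAlgebraFreeMonoid
      (R := ℤ) (X := ℕ)).symm.toLinearEquiv.toLinearMap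
    (LinearEquiv.ker _)
  convert this using 1
  funext c
  simp only [Function.comp, LinearEquiv.coe_coe, AlgEquiv.toLinearEquiv_apply]
  rw [← equiv_Zprod c.blocks, AlgEquiv.symm_apply_apply]
  · rfl
  · rfl
  · exact Subsingleton.elim _ _

/-- In each degree `m`, the pairing `⟨Z_{m_1}⋯Z_{m_r}, M_{(n_1,…,n_s)}⟩ = δ` of the
degree-`m` components of `NSym` and `QSym` is a perfect pairing of free abelian groups
of the same finite rank, with dual bases indexed by compositions of `m`. -/
theorem nsym_qsym_perfect_pairing (m : ℕ) :
    ∃ (bN : Module.Basis (Composition m) ℤ (NSymComp m))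
      (bQ : Module.Basis (Composition m) ℤ (QSymComp m))
      (B : NSymComp m →ₗ[ℤ] QSymComp m →ₗ[ℤ] ℤ),
      (∀ c, (bN c : FreeAlgebra ℤ ℕ) = Zprod c.blocks) ∧
      (∀ c, (bQ c : MvPowerSeries ℕ ℤ) = Mqs c.blocks) ∧
      (∀ c c', B (bN c) (bQ c') = if c = c' then 1 else 0) ∧
      Function.Bijective (B : NSymComp m → Module.Dual ℤ (QSymComp m)) := by
  let bN : Module.Basis (Composition m) ℤ (NSymComp m) := Module.Basis.span (Zprod_linearIndependent m)
  let bQ : Module.Basis (Composition m) ℤ (QSymComp m) := Module.Basis.span (Mqs_linearIndependent m)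
  have hbN : ∀ c, (bN c : FreeAlgebra ℤ ℕ) = Zprod c.blocks := fun c =>
    Module.Basis.coe_span_apply _ c
  have hbQ : ∀ c, (bQ c : MvPowerSeries ℕ ℤ) = Mqs c.blocks := fun c =>
    Module.Basis.coe_span_apply _ c
  let B : NSymComp m →ₗ[ℤ] QSymComp m →ₗ[ℤ] ℤ := bN.constr ℤ fun c => bQ.coord c
  refine ⟨bN, bQ, B, hbN, hbQ, ?_, ?_⟩
  · intro c c'
    simp only [B, Module.Basis.constr_basis, Module.Basis.coord_apply, Module.Basis.repr_self,
      Finsupp.single_apply]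
    simp [eq_comm]
  · have hB : B = (bN.equiv bQ.dualBasis (Equiv.refl _)).toLinearMap := by
      apply bN.ext
      intro c
      rw [Module.Basis.constr_basis, LinearEquiv.coe_coe, Module.Basis.equiv_apply,
        Equiv.refl_apply, Module.Basis.coe_dualBasis]
    rw [hB]
    exact (bN.equiv bQ.dualBasis (Equiv.refl _)).bijective
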